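/- arXiv:2511.14750 — 2 statements merged into one kernel-verified Lean document; each statement's English description precedes it below -/
import Mathlib

section
/- Equivalently, for every positive integer n the map 𝔮 ↦ 𝔮^{(n)} := d_{com,A}^{(n)}(𝔮)* (the transpose of d_{com,A}^{(n)}(𝔮)) is order-preserving for the dominance order: 𝔮 ≤ 𝔮′ implies 𝔮^{(n)} ≤ 𝔮′^{(n)}. -/
noncomputable section
open scoped Classical

namespace PaperStmt

/-- The parts of a partition (multiset of naturals) sorted in non-increasing order. -/
def sortDesc (p : Multiset ℕ) : List ℕ := (p.sort (· ≤ ·)).reverse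

/-- Partial sum of the first `k` entries of a list. -/
def psum (l : List ℕ) (k : ℕ) : ℕ := (l.take k).sum

/-- Dominance order on partitions of the same integer. -/
def Dom (p q : Multiset ℕ) : Prop :=
  p.sum = q.sum ∧ ∀ k, psum (sortDesc p) k ≤ psum (sortDesc q) k

/-- A partition: a multiset of positive parts. -/
def IsPartition (p : Multiset ℕ) : Prop := 0 ∉ p

/-- Type B: partition of an odd integer, every even part with even multiplicity. -/
def typeB (p : Multiset ℕ) : Prop := Odd p.sum ∧ ∀ v ≠ 0, Even v → Even (p.count v)

/-- Type C: partition of an even integer, every odd part with even multiplicity. -/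
def typeC (p : Multiset ℕ) : Prop := Even p.sum ∧ ∀ v, Odd v → Even (p.count v)

/-- Type D: partition of an even integer, every even part with even multiplicity. -/
def typeD (p : Multiset ℕ) : Prop := Even p.sum ∧ ∀ v ≠ 0, Even v → Even (p.count v)

/-- `q` is the `X`-collapse of `p`: the largest partition of type `X` below `p`
in dominance order. -/
def IsCollapse (X : Multiset ℕ → Prop) (p q : Multiset ℕ) : Prop :=
  X q ∧ Dom q p ∧ ∀ q', X q' → Dom q' p → Dom q' q

def collapse (X : Multiset ℕ → Prop) (p : Multiset ℕ) : Multiset ℕ :=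
  if h : ∃ q, IsCollapse X p q then h.choose else 0

def collapseB : Multiset ℕ → Multiset ℕ := collapse typeB
def collapseC : Multiset ℕ → Multiset ℕ := collapse typeC
def collapseD : Multiset ℕ → Multiset ℕ := collapse typeD

/-- The largest part. -/
def maxPart (p : Multiset ℕ) : ℕ := (sortDesc p).headI

/-- The smallest (positive) part. -/
def minPart (p : Multiset ℕ) : ℕ := (sortDesc p).getLastD 0

/-- `p⁺`: add 1 to the largest part. -/
def pplus (p : Multiset ℕ) : Multiset ℕ := (maxPart p + 1) ::ₘ p.erase (maxPart p)

/-- `p⁻`: subtract 1 from the smallest part, dropping a resulting zero. -/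
def pminus (p : Multiset ℕ) : Multiset ℕ :=
  Multiset.filter (0 < ·) ((minPart p - 1) ::ₘ p.erase (minPart p))

/-- `p⁺⁻`: add 1 to the largest part and subtract 1 from the smallest part. -/
def pmOp (p : Multiset ℕ) : Multiset ℕ := pminus (pplus p)

def zipSum : List ℕ → List ℕ → List ℕ
  | [], l => l
  | a :: as, [] => a :: as
  | a :: as, b :: bs => (a + b) :: zipSum as bs

/-- Coordinatewise sum of two partitions. -/
def addP (p q : Multiset ℕ) : Multiset ℕ := (zipSum (sortDesc p) (sortDesc q) : List ℕ)

/-- Double every part of a partition. -/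
def doubleP (p : Multiset ℕ) : Multiset ℕ := p.map (fun v => 2 * v)

/-- The partition `𝔰(m; n) = (n^a, b)` where `m = n a + b`, `0 ≤ b < n`. -/
def sMn (m n : ℕ) : Multiset ℕ :=
  Multiset.replicate (m / n) n + (if m % n = 0 then 0 else {m % n})

/-- The duality `d_{com,A}^{(n)}`: coordinatewise sum of the `𝔰(pᵢ; n)`. -/
def dcomA (n : ℕ) (p : Multiset ℕ) : Multiset ℕ :=
  (sortDesc p).foldr (fun q acc => addP (sMn q n) acc) 0

/-- Transpose (conjugate) of a partition: the `j`-th part is `#{i : pᵢ ≥ j}`. -/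
def transposeP (p : Multiset ℕ) : Multiset ℕ :=
  Multiset.filter (0 < ·)
    ((Multiset.range (maxPart p)).map (fun j => (p.filter (fun v => j + 1 ≤ v)).card))



/-! ### Auxiliary definitions and lemmas for the proof -/

/-- clamp function: `min n (m - j*n)` (with truncated subtraction). -/
def cl (n m j : ℕ) : ℕ := min n (m - j*n)

/-- Column sums of the family `𝔰(m;n)`, `m ∈ l`. -/
def cf (n : ℕ) (l : List ℕ) (j : ℕ) : ℕ := (l.map (fun m => cl n m j)).sum

/-- The `dcomA` fold over an arbitrary list. -/
def dList (n : ℕ) (l : List ℕ) : Multiset ℕ := l.foldr (fun q acc => addP (sMn q n) acc) 0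

lemma coe_sortDesc (M : Multiset ℕ) : (sortDesc M : Multiset ℕ) = M := by
  unfold sortDesc
  rw [← Multiset.coe_reverse, List.reverse_reverse, Multiset.sort_eq]

lemma sortDesc_sorted (M : Multiset ℕ) : (sortDesc M).Pairwise (· ≥ ·) := by
  unfold sortDesc
  rw [List.pairwise_reverse]
  exact (Multiset.pairwise_sort (s := M) (r := (· ≤ ·))).imp (fun h => h)

lemma sortDesc_coe (L : List ℕ) (h : L.Pairwise (· ≥ ·)) : sortDesc (↑L) = L := by
  have h1 : List.Perm (sortDesc (↑L : Multiset ℕ)) L :=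
    Multiset.coe_eq_coe.mp (coe_sortDesc (↑L : Multiset ℕ))
  exact List.Perm.eq_of_pairwise' (sortDesc_sorted _) h h1


lemma getD_replicate (a x j : ℕ) :
    (List.replicate a x).getD j 0 = if j < a then x else 0 := by
  by_cases h : j < a
  · rw [List.getD_eq_getElem _ _ (by simpa using h)]
    simp [h]
  · rw [List.getD_eq_default _ _ (by simpa using h)]
    simp [h]

lemma sMn_sortDesc {n : ℕ} (hn : 0 < n) (m : ℕ) :
    sortDesc (sMn m n) = List.replicate (m / n) n ++ (if m % n = 0 then [] else [m % n]) := by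
  have hco : ((List.replicate (m / n) n ++ (if m % n = 0 then [] else [m % n]) : List ℕ) :
      Multiset ℕ) = sMn m n := by
    by_cases h : m % n = 0
    · simp [sMn, h, Multiset.coe_replicate]
    · simp only [h, if_neg h, sMn]
      rw [← Multiset.coe_replicate, ← Multiset.coe_singleton, ← Multiset.coe_add]
      simp
  have hs : (List.replicate (m / n) n ++ (if m % n = 0 then [] else [m % n])).Pairwise (· ≥ ·) := by
    rw [List.pairwise_append]
    refine ⟨List.pairwise_replicate.mpr (by simp), ?_, ?_⟩
    · by_cases h : m % n = 0 <;> simp [h]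
    · intro a ha b hb
      by_cases h : m % n = 0
      · simp [h] at hb
      · simp [h] at hb
        rw [List.eq_of_mem_replicate ha, hb]
        exact le_of_lt (Nat.mod_lt _ hn)
  rw [← hco, sortDesc_coe _ hs]

lemma sMn_getD {n : ℕ} (hn : 0 < n) (m j : ℕ) :
    (sortDesc (sMn m n)).getD j 0 = cl n m j := by
  rw [sMn_sortDesc hn m]
  have hdm := Nat.div_add_mod m n
  have hmlt := Nat.mod_lt m hn
  have hj1 : j < m / n → j * n + n ≤ m := by
    intro h
    have h1 : (j+1) * n ≤ (m/n) * n := Nat.mul_le_mul_right n (by omega)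
    have h2 : (m/n) * n ≤ m := Nat.div_mul_le_self m n
    nlinarith
  have hj2 : m / n < j → m ≤ j * n := by
    intro h
    have h1 : (m/n + 1) * n ≤ j * n := Nat.mul_le_mul_right n (by omega)
    nlinarith
  by_cases h : j < m / n
  · rw [List.getD_append _ _ _ _ (by simpa using h), getD_replicate]
    have := hj1 h
    simp only [if_pos h, cl]
    omega
  · rw [List.getD_append_right _ _ _ _ (by simpa using h)]
    simp only [List.length_replicate]
    by_cases h2 : m / n = j
    · subst h2
      have hsub : m - m / n * n = m % n := by rw [Nat.mul_comm]; omega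
      by_cases hmod : m % n = 0
      · simp [hmod, cl]; omega
      · simp [hmod, cl]
        omega
    · have hlt : m / n < j := by omega
      have := hj2 hlt
      by_cases hmod : m % n = 0
      · simp [hmod, cl]
        omega
      · simp only [if_neg hmod, cl]
        rw [List.getD_eq_default _ _ (by simp; omega)]
        omega

lemma zipSum_getD (x y : List ℕ) (j : ℕ) :
    (zipSum x y).getD j 0 = x.getD j 0 + y.getD j 0 := by
  induction x generalizing y j with
  | nil => simp [zipSum]
  | cons a as ih =>
    cases y with
    | nil => simp [zipSum]
    | cons b bs =>
      cases j with
      | zero => simp [zipSum]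
      | succ j => simpa [zipSum] using ih bs j

lemma sorted_getD_antitone {L : List ℕ} (h : L.Pairwise (· ≥ ·)) (j : ℕ) :
    L.getD (j+1) 0 ≤ L.getD j 0 := by
  by_cases hj : j + 1 < L.length
  · rw [List.getD_eq_getElem _ _ hj, List.getD_eq_getElem _ _ (by omega)]
    exact List.pairwise_iff_getElem.mp h j (j+1) (by omega) hj (by simp)
  · rw [List.getD_eq_default _ _ (by omega)]
    exact Nat.zero_le _

lemma sorted_of_getD_antitone {L : List ℕ} (h : ∀ j, L.getD (j+1) 0 ≤ L.getD j 0) :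
    L.Pairwise (· ≥ ·) := by
  rw [← List.isChain_iff_pairwise]
  rw [List.isChain_iff_getElem]
  intro i hi
  have := h i
  rw [List.getD_eq_getElem _ _ (by omega), List.getD_eq_getElem _ _ (by omega)] at this
  exact this

lemma zipSum_sorted {x y : List ℕ} (hx : x.Pairwise (· ≥ ·)) (hy : y.Pairwise (· ≥ ·)) :
    (zipSum x y).Pairwise (· ≥ ·) := by
  apply sorted_of_getD_antitone
  intro j
  rw [zipSum_getD, zipSum_getD]
  exact Nat.add_le_add (sorted_getD_antitone hx j) (sorted_getD_antitone hy j)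

lemma list_sum_eq_range {f : ℕ → ℕ} (hf : f 0 = 0) :
    ∀ (L : List ℕ) (J : ℕ), L.length ≤ J →
    (L.map f).sum = ∑ j ∈ Finset.range J, f (L.getD j 0) := by
  intro L
  induction L with
  | nil => intro J _; simp [hf]
  | cons a L ih =>
    intro J hJ
    cases J with
    | zero => simp at hJ
    | succ J =>
      rw [Finset.sum_range_succ']
      simp only [List.getD_cons_succ, List.getD_cons_zero]
      rw [← ih J (by simpa using hJ)]
      simp [Nat.add_comm]

lemma psum_eq_range (L : List ℕ) (k : ℕ) :
    psum L k = ∑ j ∈ Finset.range k, L.getD j 0 := by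
  induction L generalizing k with
  | nil => simp [psum]
  | cons a L ih =>
    cases k with
    | zero => simp [psum]
    | succ k =>
      rw [Finset.sum_range_succ']
      simp only [List.getD_cons_succ, List.getD_cons_zero]
      rw [← ih k]
      simp [psum, Nat.add_comm]
lemma sum_cl (n m J : ℕ) : ∑ j ∈ Finset.range J, cl n m j = min m (J*n) := by
  induction J with
  | zero => simp [cl]
  | succ J ih =>
    rw [Finset.sum_range_succ, ih]
    have : (J+1)*n = J*n + n := by ring
    simp only [cl, this]
    omega

lemma sum_cl_Ico (n m x J : ℕ) (hx : x ≤ J) (hm : m ≤ J*n) :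
    ∑ j ∈ Finset.Ico x J, cl n m j = m - x*n := by
  have h1 : (∑ j ∈ Finset.Ico 0 x, cl n m j) + ∑ j ∈ Finset.Ico x J, cl n m j
      = ∑ j ∈ Finset.Ico 0 J, cl n m j :=
    Finset.sum_Ico_consecutive _ (Nat.zero_le x) hx
  rw [← Finset.range_eq_Ico, ← Finset.range_eq_Ico] at h1
  rw [sum_cl, sum_cl] at h1
  omega

lemma cl_antitone (n m : ℕ) {j j' : ℕ} (h : j ≤ j') : cl n m j' ≤ cl n m j := by
  have := Nat.mul_le_mul_right n h
  simp only [cl]; omega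

lemma cf_antitone (n : ℕ) (l : List ℕ) {j j' : ℕ} (h : j ≤ j') : cf n l j' ≤ cf n l j := by
  induction l with
  | nil => simp [cf]
  | cons m l ih =>
    simp only [cf, List.map_cons, List.sum_cons] at ih ⊢
    exact Nat.add_le_add (cl_antitone n m h) ih

lemma cf_Ico (n : ℕ) (l : List ℕ) (x J : ℕ) (hx : x ≤ J) (hm : ∀ m ∈ l, m ≤ J*n) :
    ∑ j ∈ Finset.Ico x J, cf n l j = (l.map (fun m => m - x*n)).sum := by
  induction l with
  | nil => simp [cf]
  | cons m l ih =>
    simp only [cf, List.map_cons, List.sum_cons] at ih ⊢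
    rw [Finset.sum_add_distrib, sum_cl_Ico n m x J hx (hm m (by simp)),
      ih (fun m hm' => hm m (by simp [hm']))]

lemma sum_min_le (n : ℕ) (l : List ℕ) (k x J : ℕ) (hx : x ≤ J) (hm : ∀ m ∈ l, m ≤ J*n) :
    ∑ j ∈ Finset.range J, min (cf n l j) k
      ≤ k * x + (l.map (fun m => m - x*n)).sum := by
  rw [Finset.range_eq_Ico, ← Finset.sum_Ico_consecutive _ (Nat.zero_le x) hx]
  apply Nat.add_le_add
  · calc ∑ j ∈ Finset.Ico 0 x, min (cf n l j) k ≤ ∑ _j ∈ Finset.Ico 0 x, k :=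
          Finset.sum_le_sum (fun j _ => Nat.min_le_right _ _)
    _ = k * x := by simp [Nat.mul_comm]
  · calc ∑ j ∈ Finset.Ico x J, min (cf n l j) k ≤ ∑ j ∈ Finset.Ico x J, cf n l j :=
          Finset.sum_le_sum (fun j _ => Nat.min_le_left _ _)
    _ = _ := cf_Ico n l x J hx hm

lemma sum_min_eq (n : ℕ) (l : List ℕ) (k x J : ℕ) (hx : x ≤ J) (hm : ∀ m ∈ l, m ≤ J*n)
    (h1 : ∀ j < x, k < cf n l j) (h2 : ∀ j, x ≤ j → cf n l j ≤ k) :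
    ∑ j ∈ Finset.range J, min (cf n l j) k
      = k * x + (l.map (fun m => m - x*n)).sum := by
  rw [Finset.range_eq_Ico, ← Finset.sum_Ico_consecutive _ (Nat.zero_le x) hx]
  congr 1
  · have : ∀ j ∈ Finset.Ico 0 x, min (cf n l j) k = k := by
      intro j hj
      simp only [Finset.mem_Ico] at hj
      exact Nat.min_eq_right (le_of_lt (h1 j hj.2))
    rw [Finset.sum_congr rfl this]
    simp [Nat.mul_comm]
  · have : ∀ j ∈ Finset.Ico x J, min (cf n l j) k = cf n l j := by
      intro j hj
      simp only [Finset.mem_Ico] at hj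
      exact Nat.min_eq_left (h2 j hj.1)
    rw [Finset.sum_congr rfl this, cf_Ico n l x J hx hm]

lemma psum_cons (a : ℕ) (L : List ℕ) (t : ℕ) : psum (a :: L) (t+1) = a + psum L t := rfl

lemma subsum_le (y : ℕ) (L : List ℕ) (t : ℕ) :
    psum L t ≤ (L.map (fun m => m - y)).sum + t * y := by
  induction L generalizing t with
  | nil => simp [psum]
  | cons a L ih =>
    cases t with
    | zero => simp [psum]
    | succ t =>
      rw [psum_cons]
      have := ih t
      simp only [List.map_cons, List.sum_cons]
      have h2 : (t+1)*y = t*y + y := by ring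
      omega

lemma subsum_eq (y : ℕ) (L : List ℕ) (h : L.Pairwise (· ≥ ·)) :
    (L.map (fun m => m - y)).sum + (L.countP (fun m => decide (y < m))) * y
      = psum L (L.countP (fun m => decide (y < m))) := by
  induction L with
  | nil => simp [psum]
  | cons a L ih =>
    have hs : L.Pairwise (· ≥ ·) := h.of_cons
    by_cases ha : y < a
    · have hc : (a :: L).countP (fun m => decide (y < m))
          = (L.countP (fun m => decide (y < m))) + 1 := by
        rw [List.countP_cons]
        simp [ha]
      rw [hc, psum_cons]
      have := ih hs
      simp only [List.map_cons, List.sum_cons]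
      have h2 : (L.countP (fun m => decide (y < m)) + 1)*y
          = L.countP (fun m => decide (y < m))*y + y := by ring
      omega
    · have hall : ∀ m ∈ a :: L, m ≤ y := by
        intro m hm
        rcases List.mem_cons.mp hm with rfl | hm
        · omega
        · have := List.rel_of_pairwise_cons h hm
          omega
      have hc : (a :: L).countP (fun m => decide (y < m)) = 0 := by
        rw [List.countP_eq_zero]
        intro m hm
        simpa using Nat.not_lt.mpr (hall m hm)
      rw [hc]
      simp only [psum, List.take_zero, List.sum_nil, Nat.zero_mul, Nat.add_zero]
      rw [List.sum_eq_zero]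
      intro x hx
      simp only [List.mem_map] at hx
      obtain ⟨m, hm, rfl⟩ := hx
      have := hall m hm
      omega

lemma sortDesc_zero : sortDesc (0 : Multiset ℕ) = [] := by
  simp [sortDesc]

lemma dList_getD {n : ℕ} (hn : 0 < n) (l : List ℕ) (j : ℕ) :
    (sortDesc (dList n l)).getD j 0 = cf n l j := by
  induction l generalizing j with
  | nil => simp [dList, sortDesc_zero, cf]
  | cons m l ih =>
    have hstep : dList n (m :: l) = addP (sMn m n) (dList n l) := rfl
    rw [hstep]
    have : addP (sMn m n) (dList n l)
        = ↑(zipSum (sortDesc (sMn m n)) (sortDesc (dList n l))) := rfl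
    rw [this, sortDesc_coe _ (zipSum_sorted (sortDesc_sorted _) (sortDesc_sorted _)),
      zipSum_getD, sMn_getD hn]
    simp only [cf, List.map_cons, List.sum_cons]
    rw [ih]
    rfl

lemma dList_min_sum {n : ℕ} (hn : 0 < n) (l : List ℕ) (k J : ℕ)
    (hJ : (sortDesc (dList n l)).length ≤ J) :
    ((dList n l).map (fun v => min v k)).sum
      = ∑ j ∈ Finset.range J, min (cf n l j) k := by
  conv_lhs => rw [← coe_sortDesc (dList n l)]
  rw [Multiset.map_coe, Multiset.sum_coe,
    list_sum_eq_range (by simp) _ J hJ]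
  exact Finset.sum_congr rfl (fun j _ => by rw [dList_getD hn])

lemma cf_range (n : ℕ) (l : List ℕ) (J : ℕ) (hm : ∀ m ∈ l, m ≤ J*n) :
    ∑ j ∈ Finset.range J, cf n l j = l.sum := by
  induction l with
  | nil => simp [cf]
  | cons m l ih =>
    simp only [cf, List.map_cons, List.sum_cons] at ih ⊢
    rw [Finset.sum_add_distrib, sum_cl, Nat.min_eq_left (hm m (by simp)),
      ih (fun m hm' => hm m (by simp [hm']))]

lemma dList_sum {n : ℕ} (hn : 0 < n) (l : List ℕ) : (dList n l).sum = l.sum := by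
  set J := (sortDesc (dList n l)).length + l.sum with hJdef
  have hm : ∀ m ∈ l, m ≤ J*n := by
    intro m hm
    have h1 : m ≤ l.sum := List.single_le_sum (fun a _ => Nat.zero_le a) m hm
    have h2 : J ≤ J * n := Nat.le_mul_of_pos_right J hn
    omega
  have h0 : (dList n l).sum = ((dList n l).map id).sum := by simp
  rw [h0]
  conv_lhs => rw [← coe_sortDesc (dList n l)]
  rw [Multiset.map_coe, Multiset.sum_coe,
    list_sum_eq_range (f := id) rfl _ J (by omega)]
  rw [Finset.sum_congr rfl (fun j _ => by rw [id, dList_getD hn]), cf_range n l J hm]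

lemma mem_sortDesc {M : Multiset ℕ} {v : ℕ} : v ∈ sortDesc M ↔ v ∈ M := by
  conv_rhs => rw [← coe_sortDesc M]
  simp

lemma sortDesc_eq_nil_iff {M : Multiset ℕ} : sortDesc M = [] ↔ M = 0 := by
  constructor
  · intro h
    have := coe_sortDesc M
    rw [h] at this
    simpa using this.symm
  · rintro rfl
    simp [sortDesc]

lemma maxPart_mem {M : Multiset ℕ} (h : M ≠ 0) : maxPart M ∈ M := by
  have hne : sortDesc M ≠ [] := fun hc => h (sortDesc_eq_nil_iff.mp hc)
  rw [← mem_sortDesc]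
  unfold maxPart
  cases hL : sortDesc M with
  | nil => exact absurd hL hne
  | cons a t => simp

lemma le_maxPart {M : Multiset ℕ} {v : ℕ} (h : v ∈ M) : v ≤ maxPart M := by
  rw [← mem_sortDesc] at h
  unfold maxPart
  cases hL : sortDesc M with
  | nil => rw [hL] at h; simp at h
  | cons a t =>
    rw [hL] at h
    have hs := sortDesc_sorted M
    rw [hL] at hs
    rcases List.mem_cons.mp h with rfl | h
    · simp
    · simpa using List.rel_of_pairwise_cons hs h

lemma ite_sum_min (a K : ℕ) :
    ∑ j ∈ Finset.range K, (if j + 1 ≤ a then 1 else 0) = min a K := by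
  induction K with
  | zero => simp
  | succ K ih =>
    rw [Finset.sum_range_succ, ih]
    by_cases h : K + 1 ≤ a <;> simp [h] <;> omega

lemma col_swap (M : Multiset ℕ) (K : ℕ) :
    ∑ j ∈ Finset.range K, (M.filter (fun v => j + 1 ≤ v)).card
      = (M.map (fun v => min v K)).sum := by
  induction M using Multiset.induction with
  | empty => simp
  | cons a M ih =>
    have hf : ∀ j, (Multiset.filter (fun v => j + 1 ≤ v) (a ::ₘ M)).card
        = (if j + 1 ≤ a then 1 else 0) + (M.filter (fun v => j + 1 ≤ v)).card := by
      intro j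
      rw [Multiset.filter_cons]
      by_cases h : j + 1 ≤ a <;> simp [h] <;> omega
    simp only [hf]
    rw [Finset.sum_add_distrib, ih, ite_sum_min]
    simp

lemma transposeP_eq (M : Multiset ℕ) (hM : M ≠ 0) :
    transposeP M
      = ↑((List.range (maxPart M)).map (fun j => (M.filter (fun v => j + 1 ≤ v)).card)) := by
  unfold transposeP
  have hrange : (Multiset.range (maxPart M)) = ↑(List.range (maxPart M)) := rfl
  rw [hrange, Multiset.map_coe, Multiset.filter_coe]
  congr 1
  apply List.filter_eq_self.mpr
  intro c hc
  simp only [List.mem_map, List.mem_range] at hc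
  obtain ⟨j, hj, rfl⟩ := hc
  have : maxPart M ∈ Multiset.filter (fun v => j + 1 ≤ v) M :=
    Multiset.mem_filter.mpr ⟨maxPart_mem hM, by omega⟩
  have hpos : 0 < (Multiset.filter (fun v => j + 1 ≤ v) M).card := by
    rw [Multiset.card_pos_iff_exists_mem]
    exact ⟨_, this⟩
  simpa using hpos

lemma transposeP_sortDesc (M : Multiset ℕ) (hM : M ≠ 0) :
    sortDesc (transposeP M)
      = (List.range (maxPart M)).map (fun j => (M.filter (fun v => j + 1 ≤ v)).card) := by
  rw [transposeP_eq M hM]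
  apply sortDesc_coe
  rw [List.pairwise_map]
  apply List.Pairwise.imp ?_ List.pairwise_lt_range
  intro a b hab
  apply Multiset.card_le_card
  apply Multiset.monotone_filter_right
  intro v hv
  simp at hv ⊢
  omega

lemma transposeP_psum (M : Multiset ℕ) (k : ℕ) :
    psum (sortDesc (transposeP M)) k = (M.map (fun v => min v k)).sum := by
  by_cases hM : M = 0
  · subst hM
    simp [transposeP, maxPart, sortDesc, psum]
  · rw [transposeP_sortDesc M hM]
    have htake : ((List.range (maxPart M)).map
        (fun j => (M.filter (fun v => j + 1 ≤ v)).card)).take k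
        = (List.range (min k (maxPart M))).map
            (fun j => (M.filter (fun v => j + 1 ≤ v)).card) := by
      rw [← List.map_take, List.take_range]
    rw [psum, htake]
    have : ((List.range (min k (maxPart M))).map
        (fun j => (M.filter (fun v => j + 1 ≤ v)).card)).sum
        = ∑ j ∈ Finset.range (min k (maxPart M)), (M.filter (fun v => j + 1 ≤ v)).card := rfl
    rw [this, col_swap]
    have hcg : Multiset.map (fun v => min v (min k (maxPart M))) M
        = Multiset.map (fun v => min v k) M := by
      apply Multiset.map_congr rfl
      intro v hv
      have := le_maxPart hv
      omega
    rw [hcg]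

lemma transposeP_sum (M : Multiset ℕ) : (transposeP M).sum = M.sum := by
  set k := maxPart M + M.sum with hk
  have hcard : (transposeP M).card ≤ maxPart M := by
    unfold transposeP
    calc (Multiset.filter _ _).card ≤ ((Multiset.range (maxPart M)).map _).card :=
          Multiset.card_le_card (Multiset.filter_le _ _)
    _ = maxPart M := by simp
  have hlen : (sortDesc (transposeP M)).length ≤ k := by
    have : (sortDesc (transposeP M)).length = (transposeP M).card := by
      conv_rhs => rw [← coe_sortDesc (transposeP M)]
      simp
    omega
  have h1 : (transposeP M).sum = psum (sortDesc (transposeP M)) k := by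
    conv_lhs => rw [← coe_sortDesc (transposeP M)]
    rw [psum, List.take_of_length_le hlen]
    simp
  rw [h1, transposeP_psum]
  have : ∀ v ∈ M, min v k = v := by
    intro v hv
    have h2 : v ≤ M.sum := Multiset.single_le_sum (fun a _ => Nat.zero_le a) v hv
    omega
  rw [Multiset.map_congr rfl this, Multiset.map_id']
  


/-- the map `𝔮 ↦ (d_{com,A}^{(n)}(𝔮))*` is order-preserving
for the dominance order. -/
theorem transpose_dcomA_orderPreserving (n : ℕ) (hn : 0 < n) (p q : Multiset ℕ)
    (hp : IsPartition p) (hq : IsPartition q) (h : Dom p q) :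
    Dom (transposeP (dcomA n p)) (transposeP (dcomA n q)) := by
  have hdp : dcomA n p = dList n (sortDesc p) := rfl
  have hdq : dcomA n q = dList n (sortDesc q) := rfl
  have hsump : (sortDesc p).sum = p.sum := by
    conv_rhs => rw [← coe_sortDesc p]
    rw [Multiset.sum_coe]
  have hsumq : (sortDesc q).sum = q.sum := by
    conv_rhs => rw [← coe_sortDesc q]
    rw [Multiset.sum_coe]
  have hmono : ∀ y, ((sortDesc p).map (fun m => m - y)).sum
      ≤ ((sortDesc q).map (fun m => m - y)).sum := by
    intro y
    have e1 := subsum_eq y (sortDesc p) (sortDesc_sorted p)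
    have e2 := subsum_le y (sortDesc q) ((sortDesc p).countP (fun m => decide (y < m)))
    have e3 := h.2 ((sortDesc p).countP (fun m => decide (y < m)))
    omega
  constructor
  · rw [transposeP_sum, transposeP_sum, hdp, hdq, dList_sum hn, dList_sum hn, hsump, hsumq]
    exact h.1
  · intro k
    rw [transposeP_psum, transposeP_psum, hdp, hdq]
    set lp := sortDesc p with hlp
    set lq := sortDesc q with hlq
    set J := (sortDesc (dList n lp)).length + (sortDesc (dList n lq)).length
        + p.sum + q.sum with hJ
    have hJn : J ≤ J * n := Nat.le_mul_of_pos_right _ hn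
    have hmp : ∀ m ∈ lp, m ≤ J * n := by
      intro m hm
      have h1 : m ≤ lp.sum := List.single_le_sum (fun a _ => Nat.zero_le a) m hm
      rw [hlp, hsump] at h1
      omega
    have hmq : ∀ m ∈ lq, m ≤ J * n := by
      intro m hm
      have h1 : m ≤ lq.sum := List.single_le_sum (fun a _ => Nat.zero_le a) m hm
      rw [hlq, hsumq] at h1
      omega
    have hcf0 : cf n lq q.sum ≤ k := by
      have : cf n lq q.sum = 0 := by
        apply List.sum_eq_zero
        intro v hv
        simp only [List.mem_map] at hv
        obtain ⟨m, hm, rfl⟩ := hv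
        have h1 : m ≤ lq.sum := List.single_le_sum (fun a _ => Nat.zero_le a) m hm
        rw [hlq, hsumq] at h1
        have h2 : q.sum ≤ q.sum * n := Nat.le_mul_of_pos_right _ hn
        simp only [cl]
        omega
      omega
    have hex : ∃ j, cf n lq j ≤ k := ⟨q.sum, hcf0⟩
    set x := Nat.find hex with hx
    have hxle : x ≤ q.sum := Nat.find_le hcf0
    have hxJ : x ≤ J := by omega
    have h1 : ∀ j < x, k < cf n lq j := by
      intro j hj
      have := Nat.find_min hex hj
      omega
    have h2 : ∀ j, x ≤ j → cf n lq j ≤ k := by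
      intro j hj
      exact le_trans (cf_antitone n lq hj) (Nat.find_spec hex)
    rw [dList_min_sum hn lp k J (by omega), dList_min_sum hn lq k J (by omega)]
    calc ∑ j ∈ Finset.range J, min (cf n lp j) k
        ≤ k * x + (lp.map (fun m => m - x*n)).sum := sum_min_le n lp k x J hxJ hmp
      _ ≤ k * x + (lq.map (fun m => m - x*n)).sum :=
          Nat.add_le_add_left (hmono (x*n)) _
      _ = ∑ j ∈ Finset.range J, min (cf n lq j) k :=
          (sum_min_eq n lq k x J hxJ hmq h1 h2).symm


end PaperStmt
end
end

section
/- Let 𝔮₀, 𝔮₁, 𝔮₂ be partitions, let X = B if |𝔮₀| is odd and X ∈ {C, D} (with |𝔮₀| even) otherwise. Then ((𝔮₀ + 2𝔮₁)_X + 2𝔮₂)_X = (𝔮₀ + 2(𝔮₁ + 𝔮₂))_X, where (·)_X denotes the X-collapse and + denotes coordinatewise sum of partitions (2𝔮 means doubling every part). -/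
noncomputable section
open scoped Classical

namespace PaperStmt

section Aux

/-! ### Basic list infrastructure -/

/-- 0-indexed entry of a list, with default 0. -/
def entL (l : List ℕ) (t : ℕ) : ℕ := l.getD t 0

@[simp] lemma entL_nil (t : ℕ) : entL [] t = 0 := rfl
@[simp] lemma entL_cons_zero (x : ℕ) (l : List ℕ) : entL (x :: l) 0 = x := rfl
@[simp] lemma entL_cons_succ (x : ℕ) (l : List ℕ) (t : ℕ) :
    entL (x :: l) (t+1) = entL l t := rfl

/-- Sorted in non-increasing order. -/
def SortedD (l : List ℕ) : Prop := l.Pairwise (fun a b => b ≤ a)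

lemma SortedD.tail {x : ℕ} {l : List ℕ} (h : SortedD (x :: l)) : SortedD l :=
  (List.pairwise_cons.1 h).2

lemma SortedD.head_le {x : ℕ} {l : List ℕ} (h : SortedD (x :: l)) :
    ∀ y ∈ l, y ≤ x := (List.pairwise_cons.1 h).1

lemma entL_le_head {x : ℕ} {l : List ℕ} (h : SortedD (x :: l)) (t : ℕ) :
    entL (x :: l) t ≤ x := by
  cases t with
  | zero => simp
  | succ t =>
    simp only [entL_cons_succ]
    rcases lt_or_ge t l.length with ht | ht
    · exact h.head_le _ (by simpa [entL, List.getD_eq_getElem?_getD,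
        List.getElem?_eq_getElem ht] using List.getElem_mem ht)
    · simp [entL, List.getD_eq_getElem?_getD, List.getElem?_eq_none ht]

lemma entL_antitone {l : List ℕ} (h : SortedD l) {s t : ℕ} (hst : s ≤ t) :
    entL l t ≤ entL l s := by
  induction l generalizing s t with
  | nil => simp
  | cons x xs ih =>
    cases s with
    | zero => exact entL_le_head h t
    | succ s =>
      cases t with
      | zero => omega
      | succ t => simpa using ih h.tail (by omega)

lemma psum_nil (k : ℕ) : psum [] k = 0 := by simp [psum]
lemma psum_zero (l : List ℕ) : psum l 0 = 0 := by simp [psum]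
lemma psum_cons_succ (x : ℕ) (l : List ℕ) (k : ℕ) :
    psum (x :: l) (k+1) = x + psum l k := by simp [psum]

lemma psum_succ (l : List ℕ) (k : ℕ) : psum l (k+1) = psum l k + entL l k := by
  induction l generalizing k with
  | nil => simp [psum]
  | cons x xs ih =>
    cases k with
    | zero => simp [psum]
    | succ k => simp only [psum_cons_succ, ih, entL_cons_succ]; omega

lemma psum_eq_sum_range (l : List ℕ) (k : ℕ) :
    psum l k = ∑ t ∈ Finset.range k, entL l t := by
  induction k with
  | zero => simp [psum]
  | succ k ih => rw [psum_succ, Finset.sum_range_succ, ih]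

lemma psum_mono (l : List ℕ) {j k : ℕ} (h : j ≤ k) : psum l j ≤ psum l k := by
  rw [psum_eq_sum_range, psum_eq_sum_range]
  exact Finset.sum_le_sum_of_subset (Finset.range_subset_range.2 h)

lemma psum_of_length_le (l : List ℕ) {k : ℕ} (h : l.length ≤ k) :
    psum l k = l.sum := by
  simp [psum, List.take_of_length_le h]

lemma psum_le_sum (l : List ℕ) (k : ℕ) : psum l k ≤ l.sum := by
  rcases le_or_gt l.length k with h | h
  · rw [psum_of_length_le l h]
  · calc psum l k ≤ psum l l.length := psum_mono l h.le
    _ = l.sum := psum_of_length_le l le_rfl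

/-! ### zipSum lemmas -/

@[simp] lemma zipSum_nil_left (l : List ℕ) : zipSum [] l = l := rfl

@[simp] lemma zipSum_nil_right (l : List ℕ) : zipSum l [] = l := by
  cases l <;> rfl

lemma entL_zipSum (a b : List ℕ) (t : ℕ) :
    entL (zipSum a b) t = entL a t + entL b t := by
  induction a generalizing b t with
  | nil => simp
  | cons x xs ih =>
    cases b with
    | nil => simp
    | cons y ys =>
      cases t with
      | zero => simp [zipSum]
      | succ t => simpa [zipSum] using ih ys t

lemma psum_zipSum (a b : List ℕ) (k : ℕ) :
    psum (zipSum a b) k = psum a k + psum b k := by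
  simp [psum_eq_sum_range, entL_zipSum, Finset.sum_add_distrib]

lemma zipSum_sum (a b : List ℕ) : (zipSum a b).sum = a.sum + b.sum := by
  induction a generalizing b with
  | nil => simp
  | cons x xs ih =>
    cases b with
    | nil => simp
    | cons y ys => simp [zipSum, ih]; ring

lemma zipSum_length (a b : List ℕ) :
    (zipSum a b).length = max a.length b.length := by
  induction a generalizing b with
  | nil => simp
  | cons x xs ih =>
    cases b with
    | nil => simp
    | cons y ys => simp [zipSum, ih]

lemma sortedD_of_entL {l : List ℕ} (h : ∀ t, entL l (t+1) ≤ entL l t) :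
    SortedD l := by
  have hanti : ∀ s t : ℕ, s ≤ t → entL l t ≤ entL l s := by
    intro s t hst
    induction t with
    | zero => simp_all
    | succ t ih =>
      rcases Nat.lt_or_ge s (t+1) with h' | h'
      · exact le_trans (h t) (ih (by omega))
      · have : s = t + 1 := by omega
        subst this; rfl
  rw [SortedD, List.pairwise_iff_get]
  intro i j hij
  have := hanti i j (le_of_lt hij)
  simpa [entL, List.getD_eq_getElem?_getD, List.getElem?_eq_getElem i.isLt,
    List.getElem?_eq_getElem j.isLt, List.get_eq_getElem] using this

lemma SortedD.entL_chain {l : List ℕ} (h : SortedD l) (t : ℕ) :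
    entL l (t+1) ≤ entL l t := entL_antitone h (Nat.le_succ t)

lemma zipSum_sortedD {a b : List ℕ} (ha : SortedD a) (hb : SortedD b) :
    SortedD (zipSum a b) := by
  apply sortedD_of_entL
  intro t
  rw [entL_zipSum, entL_zipSum]
  exact Nat.add_le_add (ha.entL_chain t) (hb.entL_chain t)

lemma zipSum_self (l : List ℕ) : zipSum l l = l.map (fun v => 2 * v) := by
  induction l with
  | nil => rfl
  | cons x xs ih => simp [zipSum, ih]; ring

lemma zipSum_map_two (a b : List ℕ) :
    zipSum (a.map (fun v => 2*v)) (b.map (fun v => 2*v))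
      = (zipSum a b).map (fun v => 2*v) := by
  induction a generalizing b with
  | nil => simp
  | cons x xs ih =>
    cases b with
    | nil => simp
    | cons y ys => simp [zipSum, ih]; ring

lemma zipSum_assoc (a b c : List ℕ) :
    zipSum (zipSum a b) c = zipSum a (zipSum b c) := by
  induction a generalizing b c with
  | nil => simp
  | cons x xs ih =>
    cases b with
    | nil => simp
    | cons y ys =>
      cases c with
      | nil => simp [zipSum]
      | cons z zs => simp [zipSum, ih]; ring

end Aux

section Aux2

/-! ### counts and truncated sums on lists -/

/-- Number of entries `≥ a`. -/
def cntL (l : List ℕ) (a : ℕ) : ℕ := l.countP (fun x => a ≤ x)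

/-- Sum of `(x - c)⁺` over the list. -/
def tsumL (l : List ℕ) (c : ℕ) : ℕ := (l.map (fun x => x - c)).sum

@[simp] lemma cntL_nil (a : ℕ) : cntL [] a = 0 := rfl

lemma cntL_cons (x : ℕ) (l : List ℕ) (a : ℕ) :
    cntL (x :: l) a = cntL l a + (if a ≤ x then 1 else 0) := by
  simp [cntL, List.countP_cons]

@[simp] lemma tsumL_nil (c : ℕ) : tsumL [] c = 0 := rfl

lemma tsumL_cons (x : ℕ) (l : List ℕ) (c : ℕ) :
    tsumL (x :: l) c = (x - c) + tsumL l c := by simp [tsumL]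

lemma cntL_le_length (l : List ℕ) (a : ℕ) : cntL l a ≤ l.length :=
  List.countP_le_length

lemma lt_cntL_iff {l : List ℕ} (hl : SortedD l) {a : ℕ} (ha : 1 ≤ a) (t : ℕ) :
    t < cntL l a ↔ a ≤ entL l t := by
  induction l generalizing t with
  | nil => simp; omega
  | cons x xs ih =>
    by_cases hx : a ≤ x
    · cases t with
      | zero => simp [cntL_cons, hx]
      | succ t =>
        rw [entL_cons_succ, ← ih hl.tail t, cntL_cons, if_pos hx]
        omega
    · have h0 : cntL (x :: xs) a = 0 := by
        rw [cntL_cons, if_neg hx]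
        have : cntL xs a = 0 := by
          rw [cntL, List.countP_eq_zero]
          intro y hy
          simp only [decide_eq_true_eq]
          exact fun hay => hx (le_trans hay (hl.head_le y hy))
        omega
      rw [h0]
      simp only [Nat.not_lt_zero, false_iff]
      intro hcon
      exact hx (le_trans hcon (entL_le_head hl t))

/-- L1 : `psum l k ≤ tsumL l c + k*c`. -/
lemma psum_le_tsumL (l : List ℕ) (c k : ℕ) : psum l k ≤ tsumL l c + k * c := by
  induction l generalizing k with
  | nil => simp [psum_nil]
  | cons x xs ih =>
    cases k with
    | zero => simp [psum_zero]
    | succ k =>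
      rw [psum_cons_succ, tsumL_cons]
      have := ih k
      have hx : x ≤ (x - c) + c := by omega
      calc x + psum xs k ≤ (x - c) + c + (tsumL xs c + k * c) := by omega
        _ = x - c + tsumL xs c + (k+1) * c := by ring
        _ = _ := by ring

/-- L2 : exact value of `psum` at an index between the two counts. -/
lemma psum_eq_tsumL {l : List ℕ} (hl : SortedD l) {c k : ℕ}
    (h1 : cntL l (c+1) ≤ k) (h2 : k ≤ cntL l c) :
    psum l k = tsumL l c + k * c := by
  induction l generalizing k with
  | nil => simp_all [psum_nil]
  | cons x xs ih =>
    cases k with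
    | zero =>
      simp only [psum_zero, Nat.zero_mul, Nat.add_zero]
      -- no entry ≥ c+1, so every entry ≤ c and tsumL = 0
      have hx : x ≤ c := by
        by_contra hx
        have : 0 < cntL (x :: xs) (c+1) := by
          rw [cntL_cons, if_pos (by omega)]; omega
        omega
      have : ∀ y ∈ x :: xs, y - c = 0 := by
        intro y hy
        rcases List.mem_cons.1 hy with rfl | hy
        · omega
        · have := hl.head_le y hy; omega
      rw [tsumL]
      symm
      apply List.sum_eq_zero
      intro z hz
      rcases List.mem_map.1 hz with ⟨y, hy, rfl⟩
      exact this y hy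
    | succ k =>
      have hx : c ≤ x := by
        by_contra hx
        have h0 : cntL (x :: xs) c = 0 := by
          rw [cntL_cons, if_neg (by omega)]
          have : cntL xs c = 0 := by
            rw [cntL, List.countP_eq_zero]
            intro y hy
            simp only [decide_eq_true_eq]
            intro hcy
            exact hx (le_trans hcy (hl.head_le y hy))
          omega
        omega
      have h1' : cntL xs (c+1) ≤ k := by
        rw [cntL_cons] at h1
        by_cases hx1 : c+1 ≤ x
        · rw [if_pos hx1] at h1; omega
        · have hxc : x = c := by omega
          have : cntL xs (c+1) = 0 := by
            rw [cntL, List.countP_eq_zero]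
            intro y hy
            simp only [decide_eq_true_eq]
            intro hcy
            have := hl.head_le y hy; omega
          omega
      have h2' : k ≤ cntL xs c := by
        rw [cntL_cons, if_pos hx] at h2; omega
      rw [psum_cons_succ, tsumL_cons, ih hl.tail h1' h2']
      have : x - c + c = x := by omega
      calc x + (tsumL xs c + k * c) = (x - c + c) + tsumL xs c + k * c := by omega
        _ = x - c + tsumL xs c + (k+1)*c := by ring

/-- Constant segment: if entries on `[i, M)` all equal `w` then
`psum l M = psum l i + (M-i)*w`. -/
lemma psum_const_segment {l : List ℕ} {i M w : ℕ} (him : i ≤ M)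
    (hseg : ∀ t, i ≤ t → t < M → entL l t = w) :
    psum l M = psum l i + (M - i) * w := by
  induction M with
  | zero => have : i = 0 := by omega
            subst this; simp
  | succ M ih =>
    rcases Nat.lt_or_ge i (M+1) with him' | him'
    · have hiM : i ≤ M := by omega
      rw [psum_succ, ih hiM (fun t ht1 ht2 => hseg t ht1 (by omega)),
        hseg M hiM (by omega)]
      have : M + 1 - i = (M - i) + 1 := by omega
      rw [this]; ring
    · have : i = M + 1 := by omega
      subst this; simp

end Aux2

section Aux3

/-! ### multiset bridges -/

instance : IsAntisymm ℕ (fun a b : ℕ => b ≤ a) := ⟨fun _ _ h1 h2 => le_antisymm h2 h1⟩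

lemma sortDesc_coe_s7 (p : Multiset ℕ) : (↑(sortDesc p) : Multiset ℕ) = p := by
  rw [sortDesc]
  rw [show ((↑(p.sort (· ≤ ·)).reverse : Multiset ℕ)) = ↑(p.sort (· ≤ ·)) from
    Multiset.coe_eq_coe.2 (List.reverse_perm _)]
  exact p.sort_eq _

lemma sortDesc_sortedD (p : Multiset ℕ) : SortedD (sortDesc p) := by
  rw [sortDesc, SortedD, List.pairwise_reverse]
  exact Multiset.pairwise_sort ..

lemma sortDesc_of_sortedD {l : List ℕ} (h : SortedD l) : sortDesc (↑l) = l := by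
  exact List.Perm.eq_of_pairwise' (sortDesc_sortedD ↑l) h
    (Multiset.coe_eq_coe.1 (sortDesc_coe_s7 ↑l))

/-- partial sums of a multiset (in sorted order). -/
def SM (p : Multiset ℕ) (k : ℕ) : ℕ := psum (sortDesc p) k

lemma sortDesc_addP (p q : Multiset ℕ) :
    sortDesc (addP p q) = zipSum (sortDesc p) (sortDesc q) :=
  sortDesc_of_sortedD (zipSum_sortedD (sortDesc_sortedD p) (sortDesc_sortedD q))

lemma addP_sum (p q : Multiset ℕ) : (addP p q).sum = p.sum + q.sum := by
  rw [addP, Multiset.sum_coe, zipSum_sum]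
  rw [show (sortDesc p).sum = p.sum from by rw [← Multiset.sum_coe, sortDesc_coe_s7]]
  rw [show (sortDesc q).sum = q.sum from by rw [← Multiset.sum_coe, sortDesc_coe_s7]]

lemma SM_addP (p q : Multiset ℕ) (k : ℕ) : SM (addP p q) k = SM p k + SM q k := by
  rw [SM, sortDesc_addP, psum_zipSum]; rfl

lemma entL_map_two (l : List ℕ) (t : ℕ) :
    entL (l.map (fun v => 2 * v)) t = 2 * entL l t := by
  induction l generalizing t with
  | nil => simp
  | cons x xs ih => cases t with
    | zero => simp
    | succ t => simpa using ih t

lemma sortDesc_doubleP (p : Multiset ℕ) :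
    sortDesc (doubleP p) = (sortDesc p).map (fun v => 2 * v) := by
  have h1 : (doubleP p) = ↑((sortDesc p).map (fun v => 2 * v)) := by
    rw [doubleP, ← sortDesc_coe_s7 p, Multiset.map_coe, sortDesc_coe_s7]
  rw [h1]
  apply sortDesc_of_sortedD
  apply sortedD_of_entL
  intro t
  rw [entL_map_two, entL_map_two]
  exact Nat.mul_le_mul_left 2 ((sortDesc_sortedD p).entL_chain t)

lemma SM_doubleP (p : Multiset ℕ) (k : ℕ) : SM (doubleP p) k = 2 * SM p k := by
  rw [SM, SM, sortDesc_doubleP, psum_eq_sum_range, psum_eq_sum_range,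
    Finset.mul_sum]
  exact Finset.sum_congr rfl fun t _ => entL_map_two _ t

lemma doubleP_sum (p : Multiset ℕ) : (doubleP p).sum = 2 * p.sum := by
  rw [doubleP]
  rw [show (fun v : ℕ => 2 * v) = (fun v : ℕ => 2 * id v) from rfl]
  rw [Multiset.sum_map_mul_left]
  simp

lemma entL_sortDesc_doubleP (p : Multiset ℕ) (t : ℕ) :
    entL (sortDesc (doubleP p)) t = 2 * entL (sortDesc p) t := by
  rw [sortDesc_doubleP, entL_map_two]

/-- number of elements `≥ a`. -/
def cntM (p : Multiset ℕ) (a : ℕ) : ℕ := (p.filter (a ≤ ·)).card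

lemma cntM_eq (p : Multiset ℕ) (a : ℕ) : cntM p a = cntL (sortDesc p) a := by
  rw [cntM, ← sortDesc_coe_s7 p, Multiset.filter_coe, Multiset.coe_card, cntL,
    List.countP_eq_length_filter, sortDesc_coe_s7]

lemma cntM_split (p : Multiset ℕ) (w : ℕ) :
    cntM p w = cntM p (w+1) + p.count w := by
  induction p using Multiset.induction_on with
  | empty => simp [cntM]
  | cons a s ih =>
    have e1 : cntM (a ::ₘ s) w = cntM s w + (if w ≤ a then 1 else 0) := by
      rw [cntM, cntM, Multiset.filter_cons]
      split <;> simp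
    have e2 : cntM (a ::ₘ s) (w+1) = cntM s (w+1) + (if w+1 ≤ a then 1 else 0) := by
      rw [cntM, cntM, Multiset.filter_cons]
      split <;> simp
    rw [e1, e2, Multiset.count_cons]
    split_ifs <;> omega

/-- truncated sum of a multiset. -/
def TM (p : Multiset ℕ) (c : ℕ) : ℕ := (p.map (fun x => x - c)).sum

lemma TM_eq (p : Multiset ℕ) (c : ℕ) : TM p c = tsumL (sortDesc p) c := by
  rw [TM, ← sortDesc_coe_s7 p, Multiset.map_coe, Multiset.sum_coe, tsumL, sortDesc_coe_s7]

end Aux3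

section Aux4

/-! ### parity lemmas -/

lemma even_TM {r : Multiset ℕ} {ε c : ℕ} (hc : c % 2 ≠ ε) (hε : ε < 2)
    (hr : ∀ w, w ≠ 0 → w % 2 = ε → Even (r.count w)) : Even (TM r c) := by
  rw [TM, Finset.sum_multiset_map_count]
  apply Finset.even_sum
  intro m _
  rw [smul_eq_mul]
  by_cases hm0 : m = 0
  · subst hm0; simp
  · by_cases hme : m % 2 = ε
    · exact (hr m hm0 hme).mul_right _
    · apply Even.mul_left
      rw [Nat.even_iff]
      omega

lemma odd_TM {p : Multiset ℕ} {ε v : ℕ} (hv1 : 1 ≤ v) (hvε : v % 2 = ε)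
    (hodd : Odd (p.count v)) (hmax : ∀ w, v < w → w % 2 = ε → Even (p.count w)) :
    Odd (TM p (v-1)) := by
  rw [TM, Finset.sum_multiset_map_count]
  have hvmem : v ∈ p.toFinset := by
    rw [Multiset.mem_toFinset, ← Multiset.count_pos]
    rcases hodd with ⟨t, ht⟩; omega
  rw [← Finset.add_sum_erase _ _ hvmem]
  have h1 : p.count v • (v - (v-1)) = p.count v := by
    have : v - (v - 1) = 1 := by omega
    rw [this, smul_eq_mul, Nat.mul_one]
  rw [h1]
  apply hodd.add_even
  apply Finset.even_sum
  intro m hm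
  have hmv : m ≠ v := (Finset.mem_erase.1 hm).1
  rw [smul_eq_mul]
  rcases Nat.lt_or_ge (v-1) m with hlt | hle
  · -- m ≥ v, m ≠ v so m > v
    have hmv' : v < m := by omega
    by_cases hme : m % 2 = ε
    · exact (hmax m hmv' hme).mul_right _
    · apply Even.mul_left
      rw [Nat.even_iff]
      omega
  · have : m - (v-1) = 0 := by omega
    rw [this]; simp

lemma odd_sum_of_one_viol {p : Multiset ℕ} (hodd : Odd (p.count 1))
    (hmax : ∀ w, 1 < w → w % 2 = 1 → Even (p.count w)) : Odd p.sum := by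
  have h := odd_TM (le_refl 1) rfl hodd hmax
  have : TM p 0 = p.sum := by
    rw [TM]
    rw [show (fun x : ℕ => x - 0) = id from by funext x; simp]
    simp
  simpa [this] using h

end Aux4

section Aux5

/-! ### the key bound for one collapse step -/

lemma cntL_anti (l : List ℕ) {a b : ℕ} (hab : a ≤ b) : cntL l b ≤ cntL l a := by
  apply List.countP_mono_left
  intro x _ h
  simp only [decide_eq_true_eq] at *
  omega

lemma stepBound (p u r : Multiset ℕ) (ε v : ℕ) (hvε : v % 2 = ε)
    (hv2 : 2 ≤ v) (hvodd : Odd (p.count v))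
    (hmax : ∀ w, v < w → w % 2 = ε → Even (p.count w))
    (hr : ∀ w, w ≠ 0 → w % 2 = ε → Even (r.count w))
    (hdom : ∀ k', SM r k' ≤ SM (addP p (doubleP u)) k')
    {k : ℕ} (hk1 : cntM p v ≤ k) (hk2 : k ≤ cntM p (v-1)) :
    SM r k < SM (addP p (doubleP u)) k := by
  rcases lt_or_eq_of_le (hdom k) with h | heq
  · exact h
  exfalso
  set Lp := sortDesc p with hLp
  set Lu := sortDesc u with hLu
  set Lz := sortDesc (addP p (doubleP u)) with hLz
  set Lr := sortDesc r with hLr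
  have hsp : SortedD Lp := sortDesc_sortedD p
  have hsu : SortedD Lu := sortDesc_sortedD u
  have hsz : SortedD Lz := sortDesc_sortedD _
  have hsr : SortedD Lr := sortDesc_sortedD r
  have hentz : ∀ t, entL Lz t = entL Lp t + 2 * entL Lu t := by
    intro t
    rw [hLz, sortDesc_addP, entL_zipSum, entL_sortDesc_doubleP]
  have hpsz : ∀ t, psum Lz t = psum Lp t + 2 * psum Lu t := by
    intro t
    rw [psum_eq_sum_range, psum_eq_sum_range, psum_eq_sum_range, Finset.mul_sum,
      ← Finset.sum_add_distrib]
    exact Finset.sum_congr rfl fun s _ => hentz s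
  set i := cntM p v with hi
  set m := cntM p (v-1) with hm
  have him : i ≤ m := by rw [hi, hm, cntM_eq, cntM_eq]; exact cntL_anti _ (by omega)
  have hi1 : 1 ≤ i := by
    have := cntM_split p v
    rcases hvodd with ⟨t, ht⟩
    omega
  set e := entL Lu k with he
  set c := (v - 1) + 2 * e with hc
  have hc1 : 1 ≤ c := by omega
  have hiL : i = cntL Lp v := by rw [hi, cntM_eq]
  have hmL : m = cntL Lp (v-1) := by rw [hm, cntM_eq]
  -- (1) k ≤ cntL Lz c
  have h1 : k ≤ cntL Lz c := by
    rcases Nat.eq_zero_or_pos k with rfl | hk0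
    · omega
    have hk' : k - 1 < m := by omega
    have hp1 : v - 1 ≤ entL Lp (k-1) := by
      rw [hmL] at hk'
      exact (lt_cntL_iff hsp (by omega) _).1 hk'
    have hu1 : e ≤ entL Lu (k-1) := entL_antitone hsu (by omega)
    have : c ≤ entL Lz (k-1) := by rw [hentz]; omega
    have := (lt_cntL_iff hsz hc1 (k-1)).2 this
    omega
  -- (2) M ≤ k
  set M := cntL Lz (c+1) with hM
  have h2 : M ≤ k := by
    by_contra hcon
    have := (lt_cntL_iff (a := c+1) hsz (by omega) k).1 (by omega)
    rw [hentz] at this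
    have hp2 : ¬ (v ≤ entL Lp k) := by
      intro hv'
      have := (lt_cntL_iff hsp (by omega) k).2 hv'
      omega
    omega
  -- (3) i ≤ M
  have h3 : i ≤ M := by
    have hp3 : v ≤ entL Lp (i-1) := (lt_cntL_iff (a := v) hsp (by omega) _).1 (by omega)
    have hu3 : e ≤ entL Lu (i-1) := entL_antitone hsu (by omega)
    have : c + 1 ≤ entL Lz (i-1) := by rw [hentz]; omega
    have := (lt_cntL_iff hsz (by omega) (i-1)).2 this
    omega
  -- (4) tsum equality
  set L := cntL Lr (c+1) with hL
  have hrk : psum Lr k = psum Lz k := heq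
  have q1 : psum Lz k = tsumL Lz c + k * c :=
    psum_eq_tsumL hsz (by omega) h1
  have q2 : psum Lr k ≤ tsumL Lr c + k * c := psum_le_tsumL _ _ _
  have q3 : psum Lr L = tsumL Lr c + L * c :=
    psum_eq_tsumL hsr le_rfl (cntL_anti _ (by omega))
  have q4 : psum Lr L ≤ psum Lz L := hdom L
  have q5 : psum Lz L ≤ tsumL Lz c + L * c := psum_le_tsumL _ _ _
  have htz : tsumL Lz c = tsumL Lr c := by omega
  -- (5) parity computation
  have q6 : psum Lz M = tsumL Lz c + M * c :=
    psum_eq_tsumL hsz le_rfl (cntL_anti _ (by omega))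
  have q7 : psum Lz M = psum Lp M + 2 * psum Lu M := hpsz M
  have q8 : psum Lp M = psum Lp i + (M - i) * (v-1) := by
    apply psum_const_segment h3
    intro t ht1 ht2
    have hge : v - 1 ≤ entL Lp t := by
      rw [hmL] at hk2
      exact (lt_cntL_iff hsp (by omega) t).1 (by omega)
    have hlt : ¬ (v ≤ entL Lp t) := by
      intro hv'
      have := (lt_cntL_iff hsp (by omega) t).2 hv'
      omega
    omega
  have q9 : psum Lp i = tsumL Lp (v-1) + i * (v-1) := by
    apply psum_eq_tsumL hsp
    · rw [hiL]
      have : v - 1 + 1 = v := by omega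
      rw [this]
    · rw [← hmL]; exact him
  have q10 : M * c = M * (v-1) + 2 * (M * e) := by rw [hc]; ring
  have q11 : i * (v-1) + (M - i) * (v-1) = M * (v-1) := by
    rw [← Nat.add_mul]
    congr 1
    omega
  -- parity facts
  have hoddT : Odd (tsumL Lp (v-1)) := by
    rw [hLp, ← TM_eq]
    exact odd_TM (by omega) hvε hvodd hmax
  have hevenR : Even (tsumL Lr c) := by
    rw [hLr, ← TM_eq]
    apply even_TM _ (by omega : ε < 2) hr
    omega
  rw [Nat.odd_iff] at hoddT
  rw [Nat.even_iff] at hevenR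
  omega

end Aux5

section Aux6

/-! ### the collapse step construction -/

lemma entL_eq_getElem {l : List ℕ} {t : ℕ} (h : t < l.length) :
    entL l t = l[t] := List.getD_eq_getElem l 0 h

lemma entL_eq_zero_of_le {l : List ℕ} {t : ℕ} (h : l.length ≤ t) :
    entL l t = 0 := by
  rw [entL, List.getD_eq_getElem?_getD, List.getElem?_eq_none h]
  rfl

lemma drop_eq_entL_cons {l : List ℕ} {t : ℕ} (h : t < l.length) :
    l.drop t = entL l t :: l.drop (t+1) := by
  rw [entL_eq_getElem h]
  exact List.drop_eq_getElem_cons h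

lemma drop_segment {w : ℕ} (hw : 1 ≤ w) :
    ∀ (n : ℕ) (l : List ℕ) (i : ℕ), (∀ t, i ≤ t → t < i + n → entL l t = w) →
    l.drop i = List.replicate n w ++ l.drop (i + n) := by
  intro n
  induction n with
  | zero => intro l i _; simp
  | succ n ih =>
    intro l i hseg
    have he : entL l i = w := hseg i le_rfl (by omega)
    have hlen : i < l.length := by
      by_contra hcon
      rw [entL_eq_zero_of_le (by omega)] at he
      omega
    rw [drop_eq_entL_cons hlen, he, ih l (i+1)
      (fun t ht1 ht2 => hseg t (by omega) (by omega))]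
    have : i + 1 + n = i + (n + 1) := by omega
    rw [this]
    rfl

lemma psum_append (X Y : List ℕ) (k : ℕ) :
    psum (X ++ Y) k = psum X k + psum Y (k - X.length) := by
  induction X generalizing k with
  | nil => simp [psum_nil]
  | cons x xs ih =>
    cases k with
    | zero => simp [psum_zero]
    | succ k =>
      rw [List.cons_append, psum_cons_succ, psum_cons_succ, ih]
      simp only [List.length_cons]
      have : k + 1 - (xs.length + 1) = k - xs.length := by omega
      rw [this]
      omega

lemma psum_replicate (n w k : ℕ) : psum (List.replicate n w) k = min k n * w := by
  rw [psum, List.take_replicate, List.sum_replicate, smul_eq_mul]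

lemma mem_take_entL {L : List ℕ} {n a : ℕ} (h : a ∈ L.take n) :
    ∃ t, t < n ∧ t < L.length ∧ entL L t = a := by
  rcases List.mem_iff_getElem.1 h with ⟨t, ht, rfl⟩
  have h1 : t < n := by
    have : (L.take n).length = min n L.length := List.length_take
    omega
  have h2 : t < L.length := by
    have : (L.take n).length = min n L.length := List.length_take
    omega
  refine ⟨t, h1, h2, ?_⟩
  rw [entL_eq_getElem h2]
  exact List.getElem_take' h2 h1

lemma mem_drop_entL {L : List ℕ} {n a : ℕ} (h : a ∈ L.drop n) :
    ∃ t, n ≤ t ∧ entL L t = a := by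
  rcases List.mem_iff_getElem.1 h with ⟨t, ht, rfl⟩
  refine ⟨n + t, by omega, ?_⟩
  have h2 : n + t < L.length := by
    have : (L.drop n).length = L.length - n := List.length_drop
    omega
  rw [List.getElem_drop, entL_eq_getElem h2]

lemma pairwise_replicate_ge (n w : ℕ) :
    (List.replicate n w).Pairwise (fun a b => b ≤ a) := by
  induction n with
  | zero => simp
  | succ n ih =>
    rw [List.replicate_succ, List.pairwise_cons]
    refine ⟨fun b hb => ?_, ih⟩
    rw [List.eq_of_mem_replicate hb]

lemma step_exists (p : Multiset ℕ) (v : ℕ) (hv2 : 2 ≤ v) (hvodd : Odd (p.count v)) :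
    ∃ q : Multiset ℕ, q.sum = p.sum ∧
      (∀ k, cntM p v ≤ k → k ≤ cntM p (v-1) → SM q k + 1 = SM p k) ∧
      (∀ k, k < cntM p v ∨ cntM p (v-1) < k → SM q k = SM p k) := by
  classical
  set L := sortDesc p with hLdef
  have hsL : SortedD L := sortDesc_sortedD p
  set i := cntM p v with hidef
  set m := cntM p (v-1) with hmdef
  have hiL : i = cntL L v := by rw [hidef, cntM_eq]
  have hmL : m = cntL L (v-1) := by rw [hmdef, cntM_eq]
  have him : i ≤ m := by rw [hiL, hmL]; exact cntL_anti _ (by omega)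
  have hcnt_split : cntM p v = cntM p (v+1) + p.count v := cntM_split p v
  have hi1 : 1 ≤ i := by
    rcases hvodd with ⟨t, ht⟩
    omega
  have hcntv1 : cntL L (v+1) ≤ i - 1 := by
    rcases hvodd with ⟨t, ht⟩
    have : cntM p (v+1) = cntL L (v+1) := cntM_eq p (v+1)
    omega
  -- entry at position i-1 is v
  have hent_i1 : entL L (i-1) = v := by
    have hge : v ≤ entL L (i-1) := (lt_cntL_iff (a := v) hsL (by omega) _).1 (by omega)
    have hlt : ¬ (v + 1 ≤ entL L (i-1)) := by
      intro hcon
      have := (lt_cntL_iff (a := v+1) hsL (by omega) (i-1)).2 hcon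
      omega
    omega
  have hilen : i - 1 < L.length := by
    by_contra hcon
    rw [entL_eq_zero_of_le (by omega)] at hent_i1
    omega
  -- entries in [i, m) are v-1
  have hseg : ∀ t, i ≤ t → t < m → entL L t = v - 1 := by
    intro t ht1 ht2
    have hge : v - 1 ≤ entL L t := (lt_cntL_iff (a := v-1) hsL (by omega) _).1 (by omega)
    have hlt : ¬ (v ≤ entL L t) := by
      intro hcon
      have := (lt_cntL_iff (a := v) hsL (by omega) t).2 hcon
      omega
    omega
  set e := entL L m with hedef
  have he_le : e ≤ v - 2 := by
    have hlt : ¬ (v - 1 ≤ entL L m) := by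
      intro hcon
      have := (lt_cntL_iff (a := v-1) hsL (by omega) m).2 hcon
      omega
    omega
  -- decomposition of L
  set A := L.take (i-1) with hAdef
  have hAlen : A.length = i - 1 := by
    rw [hAdef, List.length_take]
    omega
  have hdecomp : L = A ++ v :: (List.replicate (m-i) (v-1) ++ L.drop m) := by
    conv_lhs => rw [← List.take_append_drop (i-1) L]
    congr 1
    rw [drop_eq_entL_cons hilen, hent_i1]
    congr 1
    have := drop_segment (w := v-1) (by omega) (m - i) L i
      (fun t ht1 ht2 => hseg t ht1 (by omega))
    rw [show i - 1 + 1 = i by omega]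
    rw [this]
    congr 2
    omega
  -- the new list
  set D := L.drop (m+1) with hDdef
  set L' := A ++ (List.replicate (m-i+1) (v-1) ++ ((e+1) :: D)) with hL'def
  -- relation between drop m and D
  have hdropm : ∀ t, psum (L.drop m) (t+1) = e + psum D t := by
    intro t
    rcases Nat.lt_or_ge m L.length with hlen | hlen
    · rw [drop_eq_entL_cons hlen, ← hedef, psum_cons_succ]
    · have h1 : L.drop m = [] := List.drop_eq_nil_of_le hlen
      have h2 : D = [] := List.drop_eq_nil_of_le (by omega)
      have h3 : e = 0 := by rw [hedef]; exact entL_eq_zero_of_le hlen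
      rw [h1, h2, h3, psum_nil, psum_nil]
  have hdropm_sum : (L.drop m).sum = e + D.sum := by
    rcases Nat.lt_or_ge m L.length with hlen | hlen
    · rw [drop_eq_entL_cons hlen, ← hedef, List.sum_cons]
    · have h1 : L.drop m = [] := List.drop_eq_nil_of_le hlen
      have h2 : D = [] := List.drop_eq_nil_of_le (by omega)
      have h3 : e = 0 := by rw [hedef]; exact entL_eq_zero_of_le hlen
      rw [h1, h2, h3]; rfl
  -- entries of A are ≥ v
  have hAmem : ∀ a ∈ A, v ≤ a := by
    intro a ha
    rcases mem_take_entL ha with ⟨t, ht1, ht2, rfl⟩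
    exact (lt_cntL_iff (a := v) hsL (by omega) t).1 (by omega)
  -- entries of D are ≤ e
  have hDmem : ∀ b ∈ D, b ≤ e := by
    intro b hb
    rcases mem_drop_entL hb with ⟨t, ht1, rfl⟩
    rw [hedef]
    exact entL_antitone hsL (by omega)
  -- sortedness of L'
  have hsL' : SortedD L' := by
    rw [hL'def, SortedD, List.pairwise_append]
    refine ⟨?_, ?_, ?_⟩
    · rw [hAdef]
      exact List.Pairwise.sublist (List.take_sublist _ _) hsL
    · rw [List.pairwise_append]
      refine ⟨pairwise_replicate_ge _ _, ?_, ?_⟩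
      · rw [List.pairwise_cons]
        exact ⟨fun b hb => by have := hDmem b hb; omega, List.Pairwise.sublist (List.drop_sublist _ _) hsL⟩
      · intro a ha b hb
        have ha' := List.eq_of_mem_replicate ha
        rcases List.mem_cons.1 hb with rfl | hb'
        · omega
        · have := hDmem b hb'; omega
    · intro a ha b hb
      have hva := hAmem a ha
      rcases List.mem_append.1 hb with hb' | hb'
      · have := List.eq_of_mem_replicate hb'; omega
      · rcases List.mem_cons.1 hb' with rfl | hb''
        · omega
        · have := hDmem b hb''; omega
  refine ⟨(↑L' : Multiset ℕ), ?_, ?_, ?_⟩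
  · -- sums agree
    rw [Multiset.sum_coe, ← sortDesc_coe_s7 p, Multiset.sum_coe, ← hLdef]
    rw [hL'def, hdecomp]
    simp only [List.sum_append, List.sum_cons, List.sum_replicate, smul_eq_mul]
    rw [hdropm_sum]
    have : (m - i + 1) * (v-1) = (m-i)*(v-1) + (v-1) := by ring
    omega
  · -- middle range : psum drops by 1
    intro k hk1 hk2
    have hSMq : SM (↑L' : Multiset ℕ) k = psum L' k := by
      rw [SM, sortDesc_of_sortedD hsL']
    have hSMp : SM p k = psum L k := rfl
    rw [hSMq, hSMp]
    set d := k - i with hddef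
    have hkd : k = (i-1) + (d+1) := by omega
    rw [hL'def, psum_append, hAlen]
    conv_rhs => rw [hdecomp, psum_append, hAlen]
    have h1 : k - (i-1) = d + 1 := by omega
    rw [h1, psum_cons_succ, psum_append, psum_append, psum_replicate, psum_replicate,
      List.length_replicate, List.length_replicate]
    have h2 : min d (m-i) = d := by omega
    have h3 : min (d+1) (m-i+1) = d+1 := by omega
    have h4 : d - (m - i) = 0 := by omega
    have h5 : d + 1 - (m - i + 1) = 0 := by omega
    rw [h2, h3, h4, h5, psum_zero, psum_zero]
    have : (d+1) * (v-1) = d * (v-1) + (v-1) := by ring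
    omega
  · -- outside : psum equal
    intro k hk
    have hSMq : SM (↑L' : Multiset ℕ) k = psum L' k := by
      rw [SM, sortDesc_of_sortedD hsL']
    have hSMp : SM p k = psum L k := rfl
    rw [hSMq, hSMp]
    rcases hk with hk | hk
    · -- k < i : common prefix A
      rw [hL'def, psum_append]
      conv_rhs => rw [hdecomp, psum_append]
      rw [hAlen]
      have h1 : k - (i-1) = 0 := by omega
      rw [h1, psum_zero, psum_zero]
    · -- k > m
      obtain ⟨t1, htdef⟩ : ∃ t'', k - m = t'' + 1 := ⟨k - m - 1, by omega⟩
      have hkd : k - (i-1) = (m - i) + 1 + (t1+1) := by omega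
      rw [hL'def, psum_append, hAlen]
      conv_rhs => rw [hdecomp, psum_append, hAlen]
      rw [hkd]
      have hc1 : (m - i) + 1 + (t1+1) = ((m-i) + (t1+1)) + 1 := by omega
      rw [hc1, psum_cons_succ, psum_append, psum_append, psum_replicate, psum_replicate,
        List.length_replicate, List.length_replicate]
      have h2 : min ((m-i) + (t1+1)) (m-i) = m - i := by omega
      have h3 : min ((m-i) + (t1+1) + 1) (m-i+1) = m-i+1 := by omega
      have h4 : (m-i) + (t1+1) - (m-i) = t1+1 := by omega
      have h5 : (m-i) + (t1+1) + 1 - (m-i+1) = t1+1 := by omega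
      rw [h2, h3, h4, h5]
      rw [hdropm t1, psum_cons_succ]
      have : (m - i + 1) * (v-1) = (m-i)*(v-1) + (v-1) := by ring
      omega

end Aux6

section Aux7

/-! ### iterating the step: the algorithmic collapse -/

/-- termination measure -/
def measOmega (p : Multiset ℕ) : ℕ := ∑ k ∈ Finset.range (p.sum + 1), SM p k

lemma SM_le_sum (p : Multiset ℕ) (k : ℕ) : SM p k ≤ p.sum := by
  rw [SM]
  calc psum (sortDesc p) k ≤ (sortDesc p).sum := psum_le_sum _ _
    _ = p.sum := by rw [← Multiset.sum_coe, sortDesc_coe_s7]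

lemma cntM_le_sum (p : Multiset ℕ) {a : ℕ} (ha : 1 ≤ a) : cntM p a ≤ p.sum := by
  have h1 : (p.filter (a ≤ ·)).card • 1 ≤ (p.filter (a ≤ ·)).sum := by
    apply Multiset.card_nsmul_le_sum
    intro x hx
    have := (Multiset.mem_filter.1 hx).2
    omega
  have h2 : (p.filter (a ≤ ·)).sum ≤ p.sum := by
    conv_rhs => rw [← Multiset.filter_add_not (a ≤ ·) p]
    rw [Multiset.sum_add]
    omega
  simpa [cntM] using le_trans h1 h2

lemma collapse_main (ε : ℕ) (hε : ε < 2) :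
    ∀ n (p : Multiset ℕ), measOmega p ≤ n → (ε = 1 → Even p.sum) →
    ∃ pc : Multiset ℕ,
      pc.sum = p.sum ∧
      (∀ w, w ≠ 0 → w % 2 = ε → Even (pc.count w)) ∧
      (∀ k, SM pc k ≤ SM p k) ∧
      (∀ u r, (∀ w, w ≠ 0 → w % 2 = ε → Even (r.count w)) →
        (Dom r (addP p (doubleP u)) ↔ Dom r (addP pc (doubleP u)))) := by
  intro n
  induction n using Nat.strong_induction_on with
  | _ n IH =>
    intro p hmeas hpar
    by_cases hC : ∀ w, w ≠ 0 → w % 2 = ε → Even (p.count w)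
    · exact ⟨p, rfl, hC, fun _ => le_rfl, fun _ _ _ => Iff.rfl⟩
    · push_neg at hC
      obtain ⟨w0, hw00, hw0e, hw0odd⟩ := hC
      -- the largest violating value
      set V := p.toFinset.filter
        (fun w => w ≠ 0 ∧ w % 2 = ε ∧ ¬ Even (p.count w)) with hV
      have hw0mem : w0 ∈ V := by
        rw [hV, Finset.mem_filter, Multiset.mem_toFinset]
        refine ⟨?_, hw00, hw0e, hw0odd⟩
        rw [← Multiset.count_pos]
        by_contra hcon
        have : p.count w0 = 0 := by omega
        rw [this] at hw0odd
        exact hw0odd Even.zero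
      have hVne : V.Nonempty := ⟨w0, hw0mem⟩
      set v := V.max' hVne with hvdef
      have hvV : v ∈ V := V.max'_mem hVne
      rw [hV, Finset.mem_filter] at hvV
      obtain ⟨hvmem, hv0, hvε, hvodd'⟩ := hvV
      have hvodd : Odd (p.count v) := Nat.not_even_iff_odd.1 hvodd'
      have hmax : ∀ w, v < w → w % 2 = ε → Even (p.count w) := by
        intro w hvw hwe
        by_contra hcon
        have hwV : w ∈ V := by
          rw [hV, Finset.mem_filter, Multiset.mem_toFinset]
          refine ⟨?_, by omega, hwe, hcon⟩
          rw [← Multiset.count_pos]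
          by_contra h'
          have : p.count w = 0 := by omega
          rw [this] at hcon
          exact hcon Even.zero
        have := V.le_max' w hwV
        omega
      have hv2 : 2 ≤ v := by
        rcases Nat.lt_or_ge v 2 with h' | h'
        · exfalso
          interval_cases v
          · omega
          · -- v = 1 : ε = 1 and sum is even, contradiction
            have hε1 : ε = 1 := by omega
            have := odd_sum_of_one_viol hvodd (by
              intro w hw1 hwe
              exact hmax w hw1 (by omega))
            rw [Nat.odd_iff] at this
            have := hpar hε1
            rw [Nat.even_iff] at this
            omega
        · exact h'
      -- the step
      obtain ⟨q, hqsum, hqmid, hqout⟩ := step_exists p v hv2 hvodd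
      have him : cntM p v ≤ cntM p (v-1) := by
        rw [cntM_eq, cntM_eq]
        exact cntL_anti _ (by omega)
      have hi1 : 1 ≤ cntM p v := by
        have := cntM_split p v
        rcases hvodd with ⟨t, ht⟩
        omega
      have hqle : ∀ k, SM q k ≤ SM p k := by
        intro k
        rcases Nat.lt_or_ge k (cntM p v) with h' | h'
        · rw [hqout k (Or.inl h')]
        · rcases le_or_gt k (cntM p (v-1)) with h'' | h''
          · have := hqmid k h' h''
            omega
          · rw [hqout k (Or.inr h'')]
      have hmeasq : measOmega q < measOmega p := by
        rw [measOmega, measOmega, hqsum]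
        apply Finset.sum_lt_sum
        · intro k _
          exact hqle k
        · refine ⟨cntM p v, ?_, ?_⟩
          · rw [Finset.mem_range]
            have := cntM_le_sum p (show 1 ≤ v by omega)
            omega
          · have := hqmid (cntM p v) le_rfl him
            omega
      obtain ⟨pc, hpcsum, hpcC, hpcle, hpcequiv⟩ :=
        IH (measOmega q) (by omega) q le_rfl (fun h => by rw [hqsum]; exact hpar h)
      refine ⟨pc, by rw [hpcsum, hqsum], hpcC,
        fun k => le_trans (hpcle k) (hqle k), ?_⟩
      intro u r hr
      rw [← hpcequiv u r hr]
      -- remains : Dom r (addP p 2u) ↔ Dom r (addP q 2u)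
      have hsum_eq : (addP p (doubleP u)).sum = (addP q (doubleP u)).sum := by
        rw [addP_sum, addP_sum, hqsum]
      constructor
      · rintro ⟨hrs, hrdom⟩
        refine ⟨by rw [hrs, hsum_eq], ?_⟩
        intro k
        show SM r k ≤ SM (addP q (doubleP u)) k
        rw [SM_addP, SM_doubleP]
        rcases Nat.lt_or_ge k (cntM p v) with h' | h'
        · have h0 : SM r k ≤ SM (addP p (doubleP u)) k := hrdom k
          rw [SM_addP, SM_doubleP] at h0
          rw [hqout k (Or.inl h')]
          exact h0
        · rcases le_or_gt k (cntM p (v-1)) with h'' | h''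
          · have hsb := stepBound p u r ε v hvε hv2 hvodd hmax hr hrdom h' h''
            rw [SM_addP, SM_doubleP] at hsb
            have := hqmid k h' h''
            omega
          · have h0 : SM r k ≤ SM (addP p (doubleP u)) k := hrdom k
            rw [SM_addP, SM_doubleP] at h0
            rw [hqout k (Or.inr h'')]
            exact h0
      · rintro ⟨hrs, hrdom⟩
        refine ⟨by rw [hrs, ← hsum_eq], ?_⟩
        intro k
        show SM r k ≤ SM (addP p (doubleP u)) k
        have h0 : SM r k ≤ SM (addP q (doubleP u)) k := hrdom k
        rw [SM_addP, SM_doubleP] at h0 ⊢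
        have := hqle k
        omega

end Aux7

section Aux8

lemma addP_zero (p : Multiset ℕ) : addP p 0 = p := by
  rw [addP, sortDesc_zero, zipSum_nil_right, sortDesc_coe_s7]

lemma doubleP_zero : doubleP (0 : Multiset ℕ) = 0 := by
  rw [doubleP, Multiset.map_zero]

lemma addP_assoc_double (q0 q1 q2 : Multiset ℕ) :
    addP (addP q0 (doubleP q1)) (doubleP q2) = addP q0 (doubleP (addP q1 q2)) := by
  show (↑(zipSum (sortDesc (addP q0 (doubleP q1))) (sortDesc (doubleP q2))) : Multiset ℕ)
      = ↑(zipSum (sortDesc q0) (sortDesc (doubleP (addP q1 q2))))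
  rw [sortDesc_addP, sortDesc_doubleP q1, sortDesc_doubleP q2,
    sortDesc_doubleP (addP q1 q2), sortDesc_addP, zipSum_assoc, zipSum_map_two]

lemma collapse_congr (X : Multiset ℕ → Prop) (P1 P2 : Multiset ℕ)
    (h : ∀ r, X r → (Dom r P1 ↔ Dom r P2)) : collapse X P1 = collapse X P2 := by
  have hIC : IsCollapse X P1 = IsCollapse X P2 := by
    funext q
    apply propext
    constructor
    · rintro ⟨hX, hD, hmax⟩
      exact ⟨hX, (h q hX).1 hD, fun q' hX' hD' => hmax q' hX' ((h q' hX').2 hD')⟩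
    · rintro ⟨hX, hD, hmax⟩
      exact ⟨hX, (h q hX).2 hD, fun q' hX' hD' => hmax q' hX' ((h q' hX').1 hD')⟩
  rw [collapse, collapse, hIC]

lemma collapse_step_eq (ε : ℕ) (hε : ε < 2) (X : Multiset ℕ → Prop) (spar : ℕ → Prop)
    (hX : ∀ s, X s ↔ (spar s.sum ∧ ∀ w, w ≠ 0 → w % 2 = ε → Even (s.count w)))
    (q0 q1 q2 : Multiset ℕ)
    (hspar : spar (addP q0 (doubleP q1)).sum)
    (hpar : ε = 1 → Even (addP q0 (doubleP q1)).sum) :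
    collapse X (addP (collapse X (addP q0 (doubleP q1))) (doubleP q2)) =
      collapse X (addP q0 (doubleP (addP q1 q2))) := by
  set p := addP q0 (doubleP q1) with hpdef
  obtain ⟨pc, h1, h2, h3, h4⟩ := collapse_main ε hε (measOmega p) p le_rfl hpar
  have hXpc : X pc := (hX pc).2 ⟨by rw [h1]; exact hspar, h2⟩
  have hDompc : Dom pc p := ⟨h1, h3⟩
  have hmaxpc : ∀ r, X r → Dom r p → Dom r pc := by
    intro r hXr hDr
    have hCnd := ((hX r).1 hXr).2
    have h40 := h4 0 r hCnd
    rw [doubleP_zero, addP_zero, addP_zero] at h40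
    exact h40.1 hDr
  have hIC : IsCollapse X p pc := ⟨hXpc, hDompc, hmaxpc⟩
  have hex : ∃ cc, IsCollapse X p cc := ⟨pc, hIC⟩
  have hc : IsCollapse X p (collapse X p) := by
    rw [collapse, dif_pos hex]
    exact hex.choose_spec
  set c := collapse X p with hcdef
  have hd1 : Dom c pc := hmaxpc c hc.1 hc.2.1
  have hd2 : Dom pc c := hc.2.2 pc hXpc hDompc
  have hSeq : ∀ k, SM c k = SM pc k := fun k => le_antisymm (hd1.2 k) (hd2.2 k)
  have hsums : c.sum = pc.sum := hd1.1
  apply collapse_congr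
  intro r hXr
  have hCnd := ((hX r).1 hXr).2
  have e1 : Dom r (addP c (doubleP q2)) ↔ Dom r (addP pc (doubleP q2)) := by
    constructor <;> rintro ⟨hs, hd⟩ <;> refine ⟨?_, fun k => ?_⟩
    · rw [hs, addP_sum, addP_sum, hsums]
    · have hdk : SM r k ≤ SM (addP c (doubleP q2)) k := hd k
      show SM r k ≤ SM (addP pc (doubleP q2)) k
      rw [SM_addP] at hdk ⊢
      rw [← hSeq k]
      exact hdk
    · rw [hs, addP_sum, addP_sum, hsums]
    · have hdk : SM r k ≤ SM (addP pc (doubleP q2)) k := hd k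
      show SM r k ≤ SM (addP c (doubleP q2)) k
      rw [SM_addP] at hdk ⊢
      rw [hSeq k]
      exact hdk
  have e2 : Dom r (addP pc (doubleP q2)) ↔ Dom r (addP p (doubleP q2)) :=
    (h4 q2 r hCnd).symm
  rw [← addP_assoc_double, ← hpdef]
  exact e1.trans e2

end Aux8

/-- transitivity identity for collapses,
`((𝔮₀ + 2𝔮₁)_X + 2𝔮₂)_X = (𝔮₀ + 2(𝔮₁ + 𝔮₂))_X`, with `X = B` when `|𝔮₀|` is odd and
`X ∈ {C, D}` when `|𝔮₀|` is even. -/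
theorem collapse_trans_ind (q0 q1 q2 : Multiset ℕ)
    (h0 : IsPartition q0) (h1 : IsPartition q1) (h2 : IsPartition q2) :
    (Odd q0.sum →
      collapseB (addP (collapseB (addP q0 (doubleP q1))) (doubleP q2)) =
        collapseB (addP q0 (doubleP (addP q1 q2)))) ∧
    (Even q0.sum →
      collapseC (addP (collapseC (addP q0 (doubleP q1))) (doubleP q2)) =
        collapseC (addP q0 (doubleP (addP q1 q2)))) ∧
    (Even q0.sum →
      collapseD (addP (collapseD (addP q0 (doubleP q1))) (doubleP q2)) =
        collapseD (addP q0 (doubleP (addP q1 q2)))) := by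
  refine ⟨fun hodd => ?_, fun heven => ?_, fun heven => ?_⟩
  · -- type B
    simp only [collapseB]
    apply collapse_step_eq 0 (by omega) typeB (fun m => Odd m)
    · intro s
      rw [typeB]
      constructor
      · rintro ⟨hs, hcnt⟩
        exact ⟨hs, fun w hw0 hwe => hcnt w hw0 (Nat.even_iff.2 hwe)⟩
      · rintro ⟨hs, hcnt⟩
        exact ⟨hs, fun w hw0 hwe => hcnt w hw0 (Nat.even_iff.1 hwe)⟩
    · rw [addP_sum, doubleP_sum]
      rw [Nat.odd_iff] at hodd ⊢
      omega
    · intro hcon; omega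
  · -- type C
    simp only [collapseC]
    apply collapse_step_eq 1 (by omega) typeC (fun m => Even m)
    · intro s
      rw [typeC]
      constructor
      · rintro ⟨hs, hcnt⟩
        exact ⟨hs, fun w _ hwe => hcnt w (Nat.odd_iff.2 hwe)⟩
      · rintro ⟨hs, hcnt⟩
        refine ⟨hs, fun w hw => hcnt w ?_ (Nat.odd_iff.1 hw)⟩
        rcases hw with ⟨t, ht⟩
        omega
    · rw [addP_sum, doubleP_sum]
      rw [Nat.even_iff] at heven ⊢
      omega
    · intro _
      rw [addP_sum, doubleP_sum]
      rw [Nat.even_iff] at heven ⊢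
      omega
  · -- type D
    simp only [collapseD]
    apply collapse_step_eq 0 (by omega) typeD (fun m => Even m)
    · intro s
      rw [typeD]
      constructor
      · rintro ⟨hs, hcnt⟩
        exact ⟨hs, fun w hw0 hwe => hcnt w hw0 (Nat.even_iff.2 hwe)⟩
      · rintro ⟨hs, hcnt⟩
        exact ⟨hs, fun w hw0 hwe => hcnt w hw0 (Nat.even_iff.1 hwe)⟩
    · rw [addP_sum, doubleP_sum]
      rw [Nat.even_iff] at heven ⊢
      omega
    · intro hcon; omega

end PaperStmt
end
end
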